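/- Let n be a positive integer, 1 ≤ p ≤ q < ∞, β ∈ ℝ, and let Ω ⊊ ℝⁿ be a nonempty open set with nonempty complement. Then the (q,p,β)-Hardy–Sobolev inequality holds in Ω with some constant C > 0 if and only if there exists a constant C₁ > 0 such that ∫_E d(x,Ωᶜ)^{(q/p)(n−p+β)−n} dx ≤ C₁ · cap_{p,β}(E,Ω)^{q/p} for every set E ⋐ Ω. -/

import Mathlib

open MeasureTheory Metric Set
open scoped ENNReal NNReal

noncomputable section

/-- The distance from `x` to the complement of `Ω`. -/
def distC {n : ℕ} (Ω : Set (EuclideanSpace ℝ (Fin n))) (x : EuclideanSpace ℝ (Fin n)) : ℝ :=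
  Metric.infDist x Ωᶜ

/-- The distance between two sets. -/
def sDist {n : ℕ} (E F : Set (EuclideanSpace ℝ (Fin n))) : ℝ :=
  sInf (Set.image2 dist E F)

/-- A function is admissible for `Ω` if it is Lipschitz and has compact support contained
in `Ω`. -/
def Admissible {n : ℕ} (Ω : Set (EuclideanSpace ℝ (Fin n)))
    (u : EuclideanSpace ℝ (Fin n) → ℝ) : Prop :=
  (∃ K : NNReal, LipschitzWith K u) ∧ HasCompactSupport u ∧ tsupport u ⊆ Ω

/-- `E` is compactly contained in `Ω`: `E` is bounded and has positive distance to `Ωᶜ`. -/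
def CptIn {n : ℕ} (E Ω : Set (EuclideanSpace ℝ (Fin n))) : Prop :=
  Bornology.IsBounded E ∧ 0 < sDist E Ωᶜ

/-- The weighted `p`-energy of `u` on `Ω` with the distance weight `d(x,Ωᶜ)^β`. -/
def energy {n : ℕ} (p β : ℝ) (Ω : Set (EuclideanSpace ℝ (Fin n)))
    (u : EuclideanSpace ℝ (Fin n) → ℝ) : ℝ≥0∞ :=
  ∫⁻ x in Ω, ENNReal.ofReal (‖fderiv ℝ u x‖ ^ p * distC Ω x ^ β)

/-- The weighted relative `(p,β)`-capacity of `E` in `Ω`. -/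
def wcap {n : ℕ} (p β : ℝ) (E Ω : Set (EuclideanSpace ℝ (Fin n))) : ℝ≥0∞ :=
  ⨅ (u : EuclideanSpace ℝ (Fin n) → ℝ)
    (_ : Admissible Ω u ∧ ∀ x ∈ E, 1 ≤ u x), energy p β Ω u

/-- The `(q,p,β)`-Hardy–Sobolev inequality holds in `Ω` with constant `C`. -/
def HardySobolev {n : ℕ} (q p β : ℝ) (Ω : Set (EuclideanSpace ℝ (Fin n))) (C : ℝ) : Prop :=
  ∀ u : EuclideanSpace ℝ (Fin n) → ℝ, Admissible Ω u →
    (∫⁻ x in Ω, ENNReal.ofReal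
        (|u x| ^ q * distC Ω x ^ (q / p * ((n : ℝ) - p + β) - n))) ^ (1 / q) ≤
      ENNReal.ofReal C * (energy p β Ω u) ^ (1 / p)


section Aux

lemma tsum_rpow_le'  {ι : Type*} [Countable ι] (f : ι → ℝ≥0∞) {r : ℝ} (hr : 1 ≤ r) :
    ∑' i, f i ^ r ≤ (∑' i, f i) ^ r := by
  have hr0 : 0 < r := lt_of_lt_of_le one_pos hr
  set S := ∑' i, f i with hS
  rcases eq_or_ne S 0 with h0 | h0
  · have hf : ∀ i, f i = 0 := fun i =>
      le_antisymm (h0 ▸ ENNReal.le_tsum i) zero_le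
    simp [hf, ENNReal.zero_rpow_of_pos hr0]
  rcases eq_or_ne S ⊤ with htop | htop
  · rw [htop, ENNReal.top_rpow_of_pos hr0]; exact le_top
  calc ∑' i, f i ^ r ≤ ∑' i, S ^ (r - 1) * f i := by
        refine ENNReal.tsum_le_tsum fun i => ?_
        rcases eq_or_ne (f i) 0 with hfi | hfi
        · simp [hfi, ENNReal.zero_rpow_of_pos hr0]
        · have hfit : f i ≠ ⊤ := ne_top_of_le_ne_top htop (ENNReal.le_tsum i)
          calc f i ^ r = f i ^ (r - 1) * f i := by
                rw [show r = (r-1)+1 by ring, ENNReal.rpow_add _ _ hfi hfit,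
                  ENNReal.rpow_one]
                ring_nf
            _ ≤ S ^ (r - 1) * f i :=
                mul_le_mul' (ENNReal.rpow_le_rpow (ENNReal.le_tsum i) (by linarith)) le_rfl
    _ = S ^ (r - 1) * S := by rw [ENNReal.tsum_mul_left]
    _ = S ^ r := by
        rw [show r = (r-1)+1 by ring, ENNReal.rpow_add _ _ h0 htop, ENNReal.rpow_one]
        ring_nf

variable {n : ℕ}

lemma subset_of_sDist_pos {E Ω : Set (EuclideanSpace ℝ (Fin n))} (h : 0 < sDist E Ωᶜ) :
    E ⊆ Ω := by
  intro x hx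
  by_contra hxc
  have hmem : (0:ℝ) ∈ Set.image2 dist E Ωᶜ := ⟨x, hx, x, hxc, dist_self x⟩
  have hb : BddBelow (Set.image2 dist E Ωᶜ) := by
    refine ⟨0, ?_⟩
    rintro z ⟨a, _, b, _, rfl⟩
    exact dist_nonneg
  have := csInf_le hb hmem
  exact absurd h (by simp only [sDist]; linarith)

lemma sDist_pos_of_compact {E F : Set (EuclideanSpace ℝ (Fin n))} (hE : IsCompact E)
    (hEne : E.Nonempty) (hF : IsClosed F) (hFne : F.Nonempty) (hdisj : Disjoint E F) :
    0 < sDist E F := by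
  obtain ⟨x₀, hx₀, hmin⟩ := hE.exists_isMinOn hEne (continuous_infDist_pt F).continuousOn
  have hpos : 0 < infDist x₀ F :=
    (hF.notMem_iff_infDist_pos hFne).mp (disjoint_left.mp hdisj hx₀)
  refine lt_of_lt_of_le hpos (le_csInf ?_ ?_)
  · exact ⟨_, mem_image2_of_mem hx₀ hFne.choose_spec⟩
  · rintro z ⟨a, ha, b, hb, rfl⟩
    exact le_trans (hmin ha) (infDist_le_dist_of_mem hb)

/-- Truncation of `|u|` between levels `a < b`, rescaled to `[0,1]`. -/
def trunc (u : EuclideanSpace ℝ (Fin n) → ℝ) (a b : ℝ) (x : EuclideanSpace ℝ (Fin n)) : ℝ :=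
  min 1 (max 0 ((|u x| - a) * (b - a)⁻¹))

variable {u : EuclideanSpace ℝ (Fin n) → ℝ} {a b : ℝ}

lemma trunc_nonneg (x) : 0 ≤ trunc u a b x :=
  le_min one_pos.le (le_max_left _ _)

lemma trunc_le_one (x) : trunc u a b x ≤ 1 := min_le_left _ _

lemma trunc_of_le (hab : a < b) {x} (h : |u x| ≤ a) : trunc u a b x = 0 := by
  have : (|u x| - a) * (b - a)⁻¹ ≤ 0 :=
    mul_nonpos_of_nonpos_of_nonneg (by linarith) (inv_nonneg.2 (by linarith))
  simp [trunc, max_eq_left this, min_eq_right (by linarith : (0:ℝ) ≤ 1)]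

lemma trunc_of_ge (hab : a < b) {x} (h : b ≤ |u x|) : trunc u a b x = 1 := by
  have hba : (0:ℝ) < b - a := by linarith
  have : (1:ℝ) ≤ (|u x| - a) * (b - a)⁻¹ := by
    rw [le_mul_inv_iff₀ hba]; linarith
  simp [trunc, min_eq_left (le_trans this (le_max_right _ _))]

lemma trunc_zero_of_uzero (ha : 0 < a) (hab : a < b) {x} (h : u x = 0) : trunc u a b x = 0 :=
  trunc_of_le hab (by simp [h, ha.le])

lemma trunc_eq_on_mid (ha : 0 < a) (hab : a < b) {x} (h1 : a < |u x|) (h2 : |u x| < b) :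
    trunc u a b x = (|u x| - a) * (b - a)⁻¹ := by
  have hba : (0:ℝ) < b - a := by linarith
  have h0 : 0 ≤ (|u x| - a) * (b - a)⁻¹ :=
    mul_nonneg (by linarith) (inv_nonneg.2 hba.le)
  have h1' : (|u x| - a) * (b - a)⁻¹ ≤ 1 := by
    rw [mul_inv_le_iff₀ hba]; linarith
  simp [trunc, max_eq_right h0, min_eq_right h1']

lemma trunc_lipschitz (hab : a < b) {K : ℝ≥0} (hu : LipschitzWith K u) :
    ∃ K' : ℝ≥0, LipschitzWith K' (trunc u a b) := by
  refine ⟨(b - a)⁻¹.toNNReal * K, ?_⟩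
  have h1 : LipschitzWith ((b - a)⁻¹.toNNReal) (fun t : ℝ => min 1 (max 0 ((t - a) * (b - a)⁻¹))) := by
    apply LipschitzWith.of_dist_le_mul
    intro s t
    rw [Real.dist_eq, Real.dist_eq]
    have h2 : |min 1 (max 0 ((s - a) * (b - a)⁻¹)) - min 1 (max 0 ((t - a) * (b - a)⁻¹))|
        ≤ |(s - a) * (b - a)⁻¹ - (t - a) * (b - a)⁻¹| := by
      refine le_trans (abs_min_sub_min_le_max _ _ _ _) ?_
      simp only [sub_self, abs_zero]
      refine max_le (abs_nonneg _) ?_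
      refine le_trans (abs_max_sub_max_le_max _ _ _ _) ?_
      simp only [sub_self, abs_zero]
      exact max_le (abs_nonneg _) le_rfl
    refine le_trans h2 ?_
    have : (s - a) * (b - a)⁻¹ - (t - a) * (b - a)⁻¹ = (s - t) * (b - a)⁻¹ := by ring
    rw [this, abs_mul, abs_of_nonneg (inv_nonneg.2 (by linarith : (0:ℝ) ≤ b - a))]
    rw [Real.coe_toNNReal _ (inv_nonneg.2 (by linarith : (0:ℝ) ≤ b - a))]
    ring_nf
    exact le_rfl
  have habs : LipschitzWith 1 (fun t : ℝ => |t|) := by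
    exact lipschitzWith_one_norm (E := ℝ)
  have h3 : LipschitzWith (1 * K) (fun x => |u x|) := habs.comp hu
  have := h1.comp h3
  rw [one_mul] at this
  exact this

lemma trunc_support (ha : 0 < a) (hab : a < b) :
    Function.support (trunc u a b) ⊆ Function.support u := by
  intro x hx
  simp only [Function.mem_support] at hx ⊢
  intro h
  exact hx (trunc_zero_of_uzero ha hab h)

lemma indicator_bound_nonneg {A : Set (EuclideanSpace ℝ (Fin n))} {h : EuclideanSpace ℝ (Fin n) → ℝ}
    (hh : ∀ y, 0 ≤ h y) (x) : 0 ≤ A.indicator h x :=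
  Set.indicator_nonneg (fun y _ => hh y) x

lemma trunc_fderiv_bound (ha : 0 < a) (hab : a < b) (hu : Continuous u)
    (x : EuclideanSpace ℝ (Fin n)) :
    ‖fderiv ℝ (trunc u a b) x‖ ≤
      Set.indicator {y | a < |u y| ∧ |u y| < b}
        (fun y => ‖fderiv ℝ u y‖ * (b - a)⁻¹) x := by
  have hba : (0:ℝ) < b - a := by linarith
  have habs : Continuous fun y => |u y| := hu.abs
  have hRHSnn : ∀ y, (0:ℝ) ≤ ‖fderiv ℝ u y‖ * (b - a)⁻¹ :=
    fun y => mul_nonneg (norm_nonneg _) (inv_nonneg.2 hba.le)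
  rcases lt_trichotomy (|u x|) a with h1 | h1 | h1
  · -- |u x| < a : trunc vanishes near x
    have hev : trunc u a b =ᶠ[nhds x] fun _ => 0 := by
      filter_upwards [(isOpen_lt habs continuous_const).mem_nhds h1] with y hy
      exact trunc_of_le hab hy.le
    have hz : fderiv ℝ (trunc u a b) x = 0 := by
      rw [hev.fderiv_eq]; exact fderiv_const_apply 0
    rw [hz, norm_zero]
    exact indicator_bound_nonneg hRHSnn x
  · -- |u x| = a : global minimum of trunc
    have hmin : IsLocalMin (trunc u a b) x := by
      apply Filter.Eventually.of_forall
      intro y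
      rw [trunc_of_le hab h1.le]
      exact trunc_nonneg y
    rw [hmin.fderiv_eq_zero, norm_zero]
    exact indicator_bound_nonneg hRHSnn x
  · rcases lt_trichotomy (|u x|) b with h2 | h2 | h2
    · -- a < |u x| < b
      have hxA : x ∈ {y | a < |u y| ∧ |u y| < b} := ⟨h1, h2⟩
      rw [Set.indicator_of_mem hxA]
      have hux : u x ≠ 0 := fun h => by simp [h] at h1; linarith
      rcases hux.lt_or_gt with hneg | hpos
      · -- u x < 0, locally trunc = (-u - a) * (b-a)⁻¹
        have hN : IsOpen {y | a < -u y ∧ -u y < b} :=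
          IsOpen.inter (isOpen_lt continuous_const hu.neg) (isOpen_lt hu.neg continuous_const)
        have hxN : x ∈ {y | a < -u y ∧ -u y < b} := by
          have : |u x| = -u x := abs_of_neg hneg
          exact ⟨by rw [← this]; exact h1, by rw [← this]; exact h2⟩
        have hev : trunc u a b =ᶠ[nhds x] fun y => (-u y - a) * (b - a)⁻¹ := by
          filter_upwards [hN.mem_nhds hxN] with y hy
          have habs' : |u y| = -u y := abs_of_neg (by rcases hy with ⟨hy1, _⟩; linarith)
          rw [trunc_eq_on_mid ha hab (by rw [habs']; exact hy.1) (by rw [habs']; exact hy.2),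
            habs']
        by_cases hdiff : DifferentiableAt ℝ u x
        · have hd2 : fderiv ℝ (trunc u a b) x =
              fderiv ℝ (fun y => (-u y - a) * (b - a)⁻¹) x := hev.fderiv_eq
          have hd3 : fderiv ℝ (fun y => (-u y - a) * (b - a)⁻¹) x
              = (b - a)⁻¹ • fderiv ℝ (fun y => -u y - a) x := by
            exact fderiv_mul_const (hdiff.neg.sub_const a) _
          have hd4 : fderiv ℝ (fun y => -u y - a) x = -fderiv ℝ u x := by
            rw [fderiv_sub_const, fderiv_fun_neg]
          rw [hd2, hd3, hd4, norm_smul, norm_neg]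
          rw [Real.norm_eq_abs, abs_inv, abs_of_pos hba, mul_comm]
        · have hnd : ¬ DifferentiableAt ℝ (trunc u a b) x := by
            intro hd
            apply hdiff
            have hd' : DifferentiableAt ℝ (fun y => (-u y - a) * (b - a)⁻¹) x :=
              (hev.differentiableAt_iff).mp hd
            have : DifferentiableAt ℝ (fun y => -(((-u y - a) * (b - a)⁻¹) * (b - a) + a)) x :=
              ((hd'.mul_const (b - a)).add_const a).neg
            convert this using 1
            funext y
            field_simp
            ring
          rw [fderiv_zero_of_not_differentiableAt hnd, norm_zero]
          exact hRHSnn x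
      · -- u x > 0
        have hN : IsOpen {y | a < u y ∧ u y < b} :=
          IsOpen.inter (isOpen_lt continuous_const hu) (isOpen_lt hu continuous_const)
        have hxN : x ∈ {y | a < u y ∧ u y < b} := by
          have : |u x| = u x := abs_of_pos hpos
          exact ⟨by rw [← this]; exact h1, by rw [← this]; exact h2⟩
        have hev : trunc u a b =ᶠ[nhds x] fun y => (u y - a) * (b - a)⁻¹ := by
          filter_upwards [hN.mem_nhds hxN] with y hy
          have habs' : |u y| = u y := abs_of_pos (by rcases hy with ⟨hy1, _⟩; linarith)
          rw [trunc_eq_on_mid ha hab (by rw [habs']; exact hy.1) (by rw [habs']; exact hy.2),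
            habs']
        by_cases hdiff : DifferentiableAt ℝ u x
        · have hd2 : fderiv ℝ (trunc u a b) x =
              fderiv ℝ (fun y => (u y - a) * (b - a)⁻¹) x := hev.fderiv_eq
          have hd3 : fderiv ℝ (fun y => (u y - a) * (b - a)⁻¹) x
              = (b - a)⁻¹ • fderiv ℝ (fun y => u y - a) x :=
            fderiv_mul_const (hdiff.sub_const a) _
          have hd4 : fderiv ℝ (fun y => u y - a) x = fderiv ℝ u x := fderiv_sub_const a
          rw [hd2, hd3, hd4, norm_smul]
          rw [Real.norm_eq_abs, abs_inv, abs_of_pos hba, mul_comm]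
        · have hnd : ¬ DifferentiableAt ℝ (trunc u a b) x := by
            intro hd
            apply hdiff
            have hd' : DifferentiableAt ℝ (fun y => (u y - a) * (b - a)⁻¹) x :=
              (hev.differentiableAt_iff).mp hd
            have : DifferentiableAt ℝ (fun y => ((u y - a) * (b - a)⁻¹) * (b - a) + a) x :=
              (hd'.mul_const (b - a)).add_const a
            convert this using 1
            funext y
            field_simp
            ring
          rw [fderiv_zero_of_not_differentiableAt hnd, norm_zero]
          exact hRHSnn x
    · -- |u x| = b : global max
      have hmax : IsLocalMax (trunc u a b) x := by
        apply Filter.Eventually.of_forall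
        intro y
        rw [trunc_of_ge hab h2.ge]
        exact trunc_le_one y
      rw [hmax.fderiv_eq_zero, norm_zero]
      exact indicator_bound_nonneg hRHSnn x
    · -- b < |u x|
      have hev : trunc u a b =ᶠ[nhds x] fun _ => 1 := by
        filter_upwards [(isOpen_lt continuous_const habs).mem_nhds h2] with y hy
        exact trunc_of_ge hab hy.le
      have hz : fderiv ℝ (trunc u a b) x = 0 := by
        rw [hev.fderiv_eq]; exact fderiv_const_apply 1
      rw [hz, norm_zero]
      exact indicator_bound_nonneg hRHSnn x

lemma trunc_admissible {Ω : Set (EuclideanSpace ℝ (Fin n))} (hadm : Admissible Ω u)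
    (ha : 0 < a) (hab : a < b) : Admissible Ω (trunc u a b) := by
  obtain ⟨⟨K, hK⟩, hcs, hsupp⟩ := hadm
  have hts : tsupport (trunc u a b) ⊆ tsupport u := closure_mono (trunc_support ha hab)
  exact ⟨trunc_lipschitz hab hK,
    IsCompact.of_isClosed_subset hcs isClosed_closure hts, hts.trans hsupp⟩

lemma trunc_ge_one (hab : a < b) : ∀ x ∈ {y | b ≤ |u y|}, 1 ≤ trunc u a b x := by
  intro x hx
  rw [trunc_of_ge hab hx]

lemma cptIn_levelset {Ω : Set (EuclideanSpace ℝ (Fin n))} (hΩopen : IsOpen Ω)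
    (hΩcne : Ωᶜ.Nonempty) (hadm : Admissible Ω u) {c : ℝ} (hc : 0 < c)
    (hne : {y | c ≤ |u y|}.Nonempty) : CptIn {y | c ≤ |u y|} Ω := by
  obtain ⟨⟨K, hK⟩, hcs, hsupp⟩ := hadm
  have hucont : Continuous u := hK.continuous
  have hclosed : IsClosed {y | c ≤ |u y|} := isClosed_le continuous_const hucont.abs
  have hsub : {y | c ≤ |u y|} ⊆ tsupport u := by
    intro x hx
    apply subset_closure
    simp only [Function.mem_support]
    intro h
    simp only [mem_setOf_eq, h, abs_zero] at hx
    linarith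
  have hcpt : IsCompact {y | c ≤ |u y|} := IsCompact.of_isClosed_subset hcs hclosed hsub
  refine ⟨hcpt.isBounded, sDist_pos_of_compact hcpt hne hΩopen.isClosed_compl hΩcne ?_⟩
  exact Set.disjoint_left.2 fun x hx hxc => hxc (hsupp (hsub hx))

lemma energy_trunc_le {p β : ℝ} (hp : 1 ≤ p) {Ω : Set (EuclideanSpace ℝ (Fin n))}
    (hΩ : MeasurableSet Ω) (ha : 0 < a) (hab : a < b) (hu : Continuous u) :
    energy p β Ω (trunc u a b) ≤
      ENNReal.ofReal (((b - a)⁻¹) ^ p) *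
        ∫⁻ x in ({y | a < |u y| ∧ |u y| < b} ∩ Ω),
          ENNReal.ofReal (‖fderiv ℝ u x‖ ^ p * distC Ω x ^ β) := by
  have hba : (0:ℝ) < b - a := by linarith
  have hp0 : (0:ℝ) < p := lt_of_lt_of_le one_pos hp
  set A := {y | a < |u y| ∧ |u y| < b} with hA
  have hAopen : IsOpen A :=
    (isOpen_lt continuous_const hu.abs).inter (isOpen_lt hu.abs continuous_const)
  have hAm : MeasurableSet A := hAopen.measurableSet
  have hpt : ∀ x, ENNReal.ofReal (‖fderiv ℝ (trunc u a b) x‖ ^ p * distC Ω x ^ β)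
      ≤ A.indicator (fun x => ENNReal.ofReal (((b - a)⁻¹) ^ p *
          (‖fderiv ℝ u x‖ ^ p * distC Ω x ^ β))) x := by
    intro x
    have hb := trunc_fderiv_bound ha hab hu x
    by_cases hx : x ∈ A
    · rw [Set.indicator_of_mem hx]
      rw [Set.indicator_of_mem hx] at hb
      apply ENNReal.ofReal_le_ofReal
      have hw : (0:ℝ) ≤ distC Ω x ^ β := Real.rpow_nonneg (infDist_nonneg) β
      have h1 : ‖fderiv ℝ (trunc u a b) x‖ ^ p ≤ (‖fderiv ℝ u x‖ * (b - a)⁻¹) ^ p :=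
        Real.rpow_le_rpow (norm_nonneg _) hb hp0.le
      have h2 : (‖fderiv ℝ u x‖ * (b - a)⁻¹) ^ p = ‖fderiv ℝ u x‖ ^ p * ((b - a)⁻¹) ^ p :=
        Real.mul_rpow (norm_nonneg _) (inv_nonneg.2 hba.le)
      calc ‖fderiv ℝ (trunc u a b) x‖ ^ p * distC Ω x ^ β
          ≤ (‖fderiv ℝ u x‖ ^ p * ((b - a)⁻¹) ^ p) * distC Ω x ^ β := by
            rw [← h2]; exact mul_le_mul_of_nonneg_right h1 hw
        _ = ((b - a)⁻¹) ^ p * (‖fderiv ℝ u x‖ ^ p * distC Ω x ^ β) := by ring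
    · rw [Set.indicator_of_notMem hx]
      rw [Set.indicator_of_notMem hx] at hb
      have hz : ‖fderiv ℝ (trunc u a b) x‖ = 0 := le_antisymm hb (norm_nonneg _)
      rw [hz, Real.zero_rpow (ne_of_gt hp0), zero_mul]
      simp
  calc energy p β Ω (trunc u a b)
      ≤ ∫⁻ x in Ω, A.indicator (fun x => ENNReal.ofReal (((b - a)⁻¹) ^ p *
          (‖fderiv ℝ u x‖ ^ p * distC Ω x ^ β))) x := lintegral_mono hpt
    _ = ∫⁻ x in (A ∩ Ω), ENNReal.ofReal (((b - a)⁻¹) ^ p *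
          (‖fderiv ℝ u x‖ ^ p * distC Ω x ^ β)) := by
        rw [lintegral_indicator hAm, Measure.restrict_restrict hAm]
    _ = ENNReal.ofReal (((b - a)⁻¹) ^ p) *
        ∫⁻ x in (A ∩ Ω), ENNReal.ofReal (‖fderiv ℝ u x‖ ^ p * distC Ω x ^ β) := by
        rw [← lintegral_const_mul' _ _ ENNReal.ofReal_ne_top]
        congr 1
        funext x
        rw [← ENNReal.ofReal_mul (Real.rpow_nonneg (inv_nonneg.2 hba.le) p)]

lemma measurable_hsint {Ω : Set (EuclideanSpace ℝ (Fin n))}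
    {v : EuclideanSpace ℝ (Fin n) → ℝ} (hv : Continuous v) (q σ : ℝ) :
    Measurable fun x => ENNReal.ofReal (|v x| ^ q * distC Ω x ^ σ) := by
  have h1 : Measurable fun x => distC Ω x := (continuous_infDist_pt _).measurable
  have h2 : Measurable v := hv.measurable
  measurability

lemma measurable_weight (Ω : Set (EuclideanSpace ℝ (Fin n))) (σ : ℝ) :
    Measurable fun x => ENNReal.ofReal (distC Ω x ^ σ) := by
  have h1 : Measurable fun x => distC Ω x := (continuous_infDist_pt _).measurable
  measurability

end Aux

/-- Maz'ya-type characterization of the weighted Hardy–Sobolev inequality. -/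
theorem stmt0 {n : ℕ} (hn : 0 < n) (p q β : ℝ) (hp : 1 ≤ p) (hpq : p ≤ q)
    (Ω : Set (EuclideanSpace ℝ (Fin n))) (hΩopen : IsOpen Ω) (hΩne : Ω.Nonempty)
    (hΩcne : Ωᶜ.Nonempty) :
    (∃ C > 0, HardySobolev q p β Ω C) ↔
      ∃ C₁ > 0, ∀ E : Set (EuclideanSpace ℝ (Fin n)), CptIn E Ω →
        (∫⁻ x in E, ENNReal.ofReal (distC Ω x ^ (q / p * ((n : ℝ) - p + β) - n))) ≤
          ENNReal.ofReal C₁ * (wcap p β E Ω) ^ (q / p) := by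
  have hp0 : (0:ℝ) < p := lt_of_lt_of_le one_pos hp
  have hq0 : (0:ℝ) < q := lt_of_lt_of_le one_pos (le_trans hp hpq)
  constructor
  · rintro ⟨C, hC, hHS⟩
    refine ⟨C ^ q, Real.rpow_pos_of_pos hC q, ?_⟩
    intro E hE
    set σ := q / p * ((n : ℝ) - p + β) - n with hσ
    set W := ∫⁻ x in E, ENNReal.ofReal (distC Ω x ^ σ) with hW
    set K := ENNReal.ofReal (C ^ q) with hKdef
    have hKne : K ≠ 0 := by
      simp only [hKdef, ne_eq, ENNReal.ofReal_eq_zero, not_le]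
      exact Real.rpow_pos_of_pos hC q
    have hKnetop : K ≠ ⊤ := ENNReal.ofReal_ne_top
    have key : ∀ v : EuclideanSpace ℝ (Fin n) → ℝ,
        (Admissible Ω v ∧ ∀ x ∈ E, 1 ≤ v x) →
        W ≤ K * (energy p β Ω v) ^ (q / p) := by
      rintro v ⟨hadm, hge⟩
      have hvcont : Continuous v := hadm.1.choose_spec.continuous
      have step1 : W ≤ ∫⁻ x in E, ENNReal.ofReal (|v x| ^ q * distC Ω x ^ σ) := by
        refine setLIntegral_mono (measurable_hsint hvcont q σ) ?_
        intro x hx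
        apply ENNReal.ofReal_le_ofReal
        have hw : (0:ℝ) ≤ distC Ω x ^ σ := Real.rpow_nonneg infDist_nonneg σ
        refine le_mul_of_one_le_left hw (Real.one_le_rpow ?_ hq0.le)
        exact le_trans (hge x hx) (le_abs_self _)
      have step2 : (∫⁻ x in E, ENNReal.ofReal (|v x| ^ q * distC Ω x ^ σ))
          ≤ ∫⁻ x in Ω, ENNReal.ofReal (|v x| ^ q * distC Ω x ^ σ) :=
        lintegral_mono_set (subset_of_sDist_pos hE.2)
      have step3 := hHS v hadm
      have step4 : (∫⁻ x in Ω, ENNReal.ofReal (|v x| ^ q * distC Ω x ^ σ))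
          ≤ K * (energy p β Ω v) ^ (q / p) := by
        have h5 := ENNReal.rpow_le_rpow step3 hq0.le
        rw [← ENNReal.rpow_mul, one_div, inv_mul_cancel₀ (ne_of_gt hq0),
          ENNReal.rpow_one, ENNReal.mul_rpow_of_nonneg _ _ hq0.le,
          ← ENNReal.rpow_mul] at h5
        rw [hKdef, ← ENNReal.ofReal_rpow_of_nonneg hC.le hq0.le]
        convert h5 using 3
        ring
      exact le_trans step1 (le_trans step2 step4)
    have hwc : (W / K) ^ (p / q) ≤ wcap p β E Ω := by
      refine le_iInf fun v => le_iInf fun hv => ?_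
      have h1 : W / K ≤ (energy p β Ω v) ^ (q / p) :=
        ENNReal.div_le_of_le_mul' (key v hv)
      have h2 := ENNReal.rpow_le_rpow h1 (by positivity : (0:ℝ) ≤ p / q)
      rwa [← ENNReal.rpow_mul, div_mul_div_comm, mul_comm q p, div_self
        (by positivity : p * q ≠ 0), ENNReal.rpow_one] at h2
    have h3 := ENNReal.rpow_le_rpow hwc (by positivity : (0:ℝ) ≤ q / p)
    rw [← ENNReal.rpow_mul, div_mul_div_comm, mul_comm p q, div_self
      (by positivity : q * p ≠ 0), ENNReal.rpow_one] at h3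
    rw [mul_comm]
    exact (ENNReal.div_le_iff_le_mul (Or.inl hKne) (Or.inl hKnetop)).mp h3
  · rintro ⟨C₁, hC₁, hcap⟩
    have hqp1 : (1:ℝ) ≤ q / p := by rw [le_div_iff₀ hp0]; linarith
    refine ⟨(C₁ * 4 ^ q) ^ (1/q), by positivity, ?_⟩
    intro u hadm
    obtain ⟨⟨K, hK⟩, hcs, hsupp⟩ := hadm
    have hadm0 : Admissible Ω u := ⟨⟨K, hK⟩, hcs, hsupp⟩
    have hucont : Continuous u := hK.continuous
    have hΩm : MeasurableSet Ω := hΩopen.measurableSet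
    set σ := q / p * ((n : ℝ) - p + β) - n with hσ
    set g : EuclideanSpace ℝ (Fin n) → ℝ≥0∞ :=
      fun x => ENNReal.ofReal (‖fderiv ℝ u x‖ ^ p * distC Ω x ^ β) with hg
    set f : EuclideanSpace ℝ (Fin n) → ℝ≥0∞ :=
      fun x => ENNReal.ofReal (|u x| ^ q * distC Ω x ^ σ) with hf
    set D : ℤ → Set (EuclideanSpace ℝ (Fin n)) :=
      fun k => {y | (2:ℝ) ^ k ≤ |u y| ∧ |u y| < 2 ^ (k + 1)} with hDdef
    set A : ℤ → Set (EuclideanSpace ℝ (Fin n)) :=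
      fun k => {y | (2:ℝ) ^ (k - 1) < |u y| ∧ |u y| < 2 ^ k} with hAdef
    set Ek : ℤ → Set (EuclideanSpace ℝ (Fin n)) :=
      fun k => {y | (2:ℝ) ^ k ≤ |u y|} with hEkdef
    set v : ℤ → EuclideanSpace ℝ (Fin n) → ℝ :=
      fun k => trunc u (2 ^ (k - 1)) (2 ^ k) with hvdef
    have hzp : ∀ k : ℤ, (0:ℝ) < 2 ^ k := fun k => zpow_pos two_pos k
    have hlt : ∀ k : ℤ, (2:ℝ) ^ (k - 1) < 2 ^ k :=
      fun k => zpow_lt_zpow_right₀ one_lt_two (by omega)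
    have hDm : ∀ k, MeasurableSet (D k) := fun k =>
      ((isClosed_le continuous_const hucont.abs).measurableSet).inter
        (isOpen_lt hucont.abs continuous_const).measurableSet
    have hAm : ∀ k, MeasurableSet (A k) := fun k =>
      ((isOpen_lt continuous_const hucont.abs).inter
        (isOpen_lt hucont.abs continuous_const)).measurableSet
    -- Step 1 : decompose the integral
    have hfm : Measurable f := measurable_hsint hucont q σ
    have hcover : ∀ x, x ∉ (⋃ k : ℤ, D k) → f x = 0 := by
      intro x hx
      have hux : u x = 0 := by
        by_contra hux
        have h0 : 0 < |u x| := abs_pos.2 hux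
        obtain ⟨k, hk⟩ := exists_mem_Ico_zpow h0 one_lt_two
        exact hx (Set.mem_iUnion.2 ⟨k, hk.1, hk.2⟩)
      simp [hf, hux, Real.zero_rpow (ne_of_gt hq0)]
    have hT1 : (∫⁻ x in Ω, f x) = ∑' k : ℤ, ∫⁻ x in D k ∩ Ω, f x := by
      have hUm : MeasurableSet (⋃ k : ℤ, D k) := MeasurableSet.iUnion hDm
      have hfi : ∀ x, f x = (⋃ k : ℤ, D k).indicator f x := by
        intro x
        by_cases hx : x ∈ ⋃ k : ℤ, D k
        · rw [Set.indicator_of_mem hx]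
        · rw [Set.indicator_of_notMem hx, hcover x hx]
      have hdisjD : Pairwise (Function.onFun Disjoint fun k => D k ∩ Ω) := by
        intro j k hjk
        refine Set.disjoint_left.2 fun x hxj hxk => ?_
        rcases hjk.lt_or_gt with h | h
        · have : (2:ℝ) ^ (j + 1) ≤ 2 ^ k := zpow_le_zpow_right₀ one_le_two (by omega)
          have h1 := hxj.1.2
          have h2 := hxk.1.1
          linarith
        · have : (2:ℝ) ^ (k + 1) ≤ 2 ^ j := zpow_le_zpow_right₀ one_le_two (by omega)
          have h1 := hxk.1.2
          have h2 := hxj.1.1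
          linarith
      calc (∫⁻ x in Ω, f x) = ∫⁻ x in Ω, (⋃ k : ℤ, D k).indicator f x :=
            lintegral_congr fun x => hfi x
        _ = ∫⁻ x in (⋃ k : ℤ, D k) ∩ Ω, f x := by
            rw [lintegral_indicator hUm, Measure.restrict_restrict hUm]
        _ = ∫⁻ x in ⋃ k : ℤ, (D k ∩ Ω), f x := by rw [Set.iUnion_inter]
        _ = ∑' k : ℤ, ∫⁻ x in D k ∩ Ω, f x :=
            lintegral_iUnion (fun k => (hDm k).inter hΩm) hdisjD f
    -- Step 2 : bound each term via the capacity hypothesis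
    have hterm : ∀ k : ℤ, (∫⁻ x in D k ∩ Ω, f x) ≤ ENNReal.ofReal C₁ *
        (ENNReal.ofReal (((2:ℝ) ^ (k + 1)) ^ p) * energy p β Ω (v k)) ^ (q / p) := by
      intro k
      rcases Set.eq_empty_or_nonempty (D k ∩ Ω) with hemp | hne
      · rw [hemp]
        simp
      have hEkne : (Ek k).Nonempty := hne.mono fun x hx => hx.1.1
      have h1 : (∫⁻ x in D k ∩ Ω, f x) ≤ ∫⁻ x in D k ∩ Ω,
          ENNReal.ofReal (((2:ℝ) ^ (k + 1)) ^ q) * ENNReal.ofReal (distC Ω x ^ σ) := by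
        refine setLIntegral_mono ((measurable_weight Ω σ).const_mul _) ?_
        intro x hx
        rw [← ENNReal.ofReal_mul (Real.rpow_nonneg (hzp (k+1)).le q)]
        apply ENNReal.ofReal_le_ofReal
        have hw : (0:ℝ) ≤ distC Ω x ^ σ := Real.rpow_nonneg infDist_nonneg σ
        exact mul_le_mul_of_nonneg_right
          (Real.rpow_le_rpow (abs_nonneg _) hx.1.2.le hq0.le) hw
      have h2 : (∫⁻ x in D k ∩ Ω, ENNReal.ofReal (((2:ℝ) ^ (k + 1)) ^ q) *
            ENNReal.ofReal (distC Ω x ^ σ))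
          = ENNReal.ofReal (((2:ℝ) ^ (k + 1)) ^ q) *
            ∫⁻ x in D k ∩ Ω, ENNReal.ofReal (distC Ω x ^ σ) :=
        lintegral_const_mul' _ _ ENNReal.ofReal_ne_top
      have h3 : (∫⁻ x in D k ∩ Ω, ENNReal.ofReal (distC Ω x ^ σ))
          ≤ ∫⁻ x in Ek k, ENNReal.ofReal (distC Ω x ^ σ) :=
        lintegral_mono_set fun x hx => hx.1.1
      have hcpt : CptIn (Ek k) Ω := cptIn_levelset hΩopen hΩcne hadm0 (hzp k) hEkne
      have h4 := hcap (Ek k) hcpt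
      have hvadm : Admissible Ω (v k) := trunc_admissible hadm0 (hzp (k-1)) (hlt k)
      have hvge : ∀ x ∈ Ek k, 1 ≤ v k x := trunc_ge_one (hlt k)
      have h5 : wcap p β (Ek k) Ω ≤ energy p β Ω (v k) :=
        iInf_le_of_le (v k) (iInf_le_of_le ⟨hvadm, hvge⟩ le_rfl)
      have h6 : (wcap p β (Ek k) Ω) ^ (q / p) ≤ (energy p β Ω (v k)) ^ (q / p) :=
        ENNReal.rpow_le_rpow h5 (by positivity)
      have hc : ENNReal.ofReal (((2:ℝ) ^ (k + 1)) ^ q)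
          = (ENNReal.ofReal (((2:ℝ) ^ (k + 1)) ^ p)) ^ (q / p) := by
        rw [ENNReal.ofReal_rpow_of_nonneg (Real.rpow_nonneg (hzp (k+1)).le p)
          (by positivity : (0:ℝ) ≤ q / p)]
        congr 1
        rw [← Real.rpow_mul (hzp (k+1)).le]
        congr 1
        field_simp
      calc (∫⁻ x in D k ∩ Ω, f x)
          ≤ ENNReal.ofReal (((2:ℝ) ^ (k + 1)) ^ q) *
            ∫⁻ x in D k ∩ Ω, ENNReal.ofReal (distC Ω x ^ σ) := le_trans h1 (le_of_eq h2)
        _ ≤ ENNReal.ofReal (((2:ℝ) ^ (k + 1)) ^ q) *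
            (ENNReal.ofReal C₁ * (wcap p β (Ek k) Ω) ^ (q / p)) :=
            mul_le_mul_right (le_trans (lintegral_mono_set fun x hx => hx.1.1) h4) _
        _ ≤ ENNReal.ofReal (((2:ℝ) ^ (k + 1)) ^ q) *
            (ENNReal.ofReal C₁ * (energy p β Ω (v k)) ^ (q / p)) :=
            mul_le_mul_right (mul_le_mul_right h6 _) _
        _ = ENNReal.ofReal C₁ *
            ((ENNReal.ofReal (((2:ℝ) ^ (k + 1)) ^ p)) ^ (q / p) *
              (energy p β Ω (v k)) ^ (q / p)) := by rw [hc]; ring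
        _ = ENNReal.ofReal C₁ *
            (ENNReal.ofReal (((2:ℝ) ^ (k + 1)) ^ p) * energy p β Ω (v k)) ^ (q / p) := by
            rw [ENNReal.mul_rpow_of_nonneg _ _ (by positivity : (0:ℝ) ≤ q / p)]
    -- Step 3 : sum up
    set bb : ℤ → ℝ≥0∞ :=
      fun k => ENNReal.ofReal (((2:ℝ) ^ (k + 1)) ^ p) * energy p β Ω (v k) with hbdef
    have hsum1 : (∫⁻ x in Ω, f x) ≤ ENNReal.ofReal C₁ * ∑' k : ℤ, (bb k) ^ (q / p) := by
      rw [hT1, ← ENNReal.tsum_mul_left]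
      exact ENNReal.tsum_le_tsum hterm
    have hsum2 : ∑' k : ℤ, (bb k) ^ (q / p) ≤ (∑' k : ℤ, bb k) ^ (q / p) :=
      tsum_rpow_le' bb hqp1
    -- Step 4 : bound Σ bb k by the energy of u
    have hbk : ∀ k : ℤ, bb k ≤ ENNReal.ofReal ((4:ℝ) ^ p) * ∫⁻ x in A k ∩ Ω, g x := by
      intro k
      have he := energy_trunc_le (u := u) (a := (2:ℝ) ^ (k-1)) (b := (2:ℝ) ^ k)
        (β := β) hp hΩm (hzp (k-1)) (hlt k) hucont
      have h2k : (2:ℝ) ^ k - 2 ^ (k - 1) = 2 ^ (k - 1) := by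
        have h : (2:ℝ) ^ k = 2 ^ (k - 1) * 2 := by
          rw [← zpow_add_one₀ (two_ne_zero : (2:ℝ) ≠ 0)]
          congr 1
          ring
        linarith
      rw [h2k] at he
      have hconst : ENNReal.ofReal (((2:ℝ) ^ (k + 1)) ^ p) *
          ENNReal.ofReal ((((2:ℝ) ^ (k - 1))⁻¹) ^ p) = ENNReal.ofReal ((4:ℝ) ^ p) := by
        rw [← ENNReal.ofReal_mul (Real.rpow_nonneg (hzp (k+1)).le p),
          ← Real.mul_rpow (hzp (k+1)).le (inv_nonneg.2 (hzp (k-1)).le)]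
        congr 2
        rw [← div_eq_mul_inv, ← zpow_sub₀ (two_ne_zero : (2:ℝ) ≠ 0)]
        norm_num
      calc bb k ≤ ENNReal.ofReal (((2:ℝ) ^ (k + 1)) ^ p) *
            (ENNReal.ofReal ((((2:ℝ) ^ (k - 1))⁻¹) ^ p) * ∫⁻ x in A k ∩ Ω, g x) :=
            mul_le_mul_right he _
        _ = ENNReal.ofReal ((4:ℝ) ^ p) * ∫⁻ x in A k ∩ Ω, g x := by
            rw [← mul_assoc, hconst]
    have hdisjA : Pairwise (Function.onFun Disjoint fun k => A k ∩ Ω) := by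
      intro j k hjk
      refine Set.disjoint_left.2 fun x hxj hxk => ?_
      rcases hjk.lt_or_gt with h | h
      · have hle : (2:ℝ) ^ j ≤ 2 ^ (k - 1) := zpow_le_zpow_right₀ one_le_two (by omega)
        have h1 := hxj.1.2
        have h2 := hxk.1.1
        linarith
      · have hle : (2:ℝ) ^ k ≤ 2 ^ (j - 1) := zpow_le_zpow_right₀ one_le_two (by omega)
        have h1 := hxk.1.2
        have h2 := hxj.1.1
        linarith
    have hsum3 : ∑' k : ℤ, bb k ≤ ENNReal.ofReal ((4:ℝ) ^ p) * energy p β Ω u := by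
      calc ∑' k : ℤ, bb k
          ≤ ∑' k : ℤ, ENNReal.ofReal ((4:ℝ) ^ p) * ∫⁻ x in A k ∩ Ω, g x :=
            ENNReal.tsum_le_tsum hbk
        _ = ENNReal.ofReal ((4:ℝ) ^ p) * ∑' k : ℤ, ∫⁻ x in A k ∩ Ω, g x :=
            ENNReal.tsum_mul_left
        _ ≤ ENNReal.ofReal ((4:ℝ) ^ p) * energy p β Ω u := by
            apply mul_le_mul_right
            rw [← lintegral_iUnion (fun k => (hAm k).inter hΩm) hdisjA g]
            exact lintegral_mono_set (Set.iUnion_subset fun k => Set.inter_subset_right)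
    -- Step 5 : conclude
    have hfinal : (∫⁻ x in Ω, f x) ≤
        ENNReal.ofReal (C₁ * 4 ^ q) * (energy p β Ω u) ^ (q / p) := by
      calc (∫⁻ x in Ω, f x)
          ≤ ENNReal.ofReal C₁ * ∑' k : ℤ, (bb k) ^ (q / p) := hsum1
        _ ≤ ENNReal.ofReal C₁ * (∑' k : ℤ, bb k) ^ (q / p) := mul_le_mul_right hsum2 _
        _ ≤ ENNReal.ofReal C₁ *
            (ENNReal.ofReal ((4:ℝ) ^ p) * energy p β Ω u) ^ (q / p) :=
            mul_le_mul_right (ENNReal.rpow_le_rpow hsum3 (by positivity)) _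
        _ = ENNReal.ofReal (C₁ * 4 ^ q) * (energy p β Ω u) ^ (q / p) := by
            rw [ENNReal.mul_rpow_of_nonneg _ _ (by positivity : (0:ℝ) ≤ q / p),
              ENNReal.ofReal_rpow_of_nonneg (by positivity : (0:ℝ) ≤ (4:ℝ) ^ p)
                (by positivity : (0:ℝ) ≤ q / p),
              ← Real.rpow_mul (by norm_num : (0:ℝ) ≤ 4),
              show p * (q / p) = q by field_simp,
              ENNReal.ofReal_mul hC₁.le, ← mul_assoc]
    have hgoal := ENNReal.rpow_le_rpow hfinal (by positivity : (0:ℝ) ≤ 1 / q)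
    rw [ENNReal.mul_rpow_of_nonneg _ _ (by positivity : (0:ℝ) ≤ 1 / q),
      ← ENNReal.rpow_mul,
      show q / p * (1 / q) = 1 / p by field_simp,
      ENNReal.ofReal_rpow_of_nonneg (by positivity : (0:ℝ) ≤ C₁ * 4 ^ q)
        (by positivity : (0:ℝ) ≤ 1 / q)] at hgoal
    exact hgoal
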